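/- Let E/F be an extension of fields and let A be a valuation subring of F. Then there exists a valuation subring B of E such that B ∩ F = A, i.e., the preimage of B under the inclusion F → E equals A. -/
import Mathlib

/-- Every valuation subring of a field `F` extends to a valuation subring of any field
extension `E` of `F`: there is a valuation subring `B` of `E` whose preimage in `F`
is the given valuation subring `A`. -/
theorem exists_valuationSubring_extension
    {F E : Type*} [Field F] [Field E] [Algebra F E] (A : ValuationSubring F) :
    ∃ B : ValuationSubring E, ∀ x : F, algebraMap F E x ∈ B ↔ x ∈ A := by
  let f : A →+* E := (algebraMap F E).comp A.subtype
  obtain ⟨B, h, hloc⟩ := IsLocalRing.exists_factor_valuationRing f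
  refine ⟨B, fun x ↦ ⟨fun hx ↦ ?_, fun hx ↦ h ⟨x, hx⟩⟩⟩
  by_contra hxA
  have hx0 : x ≠ 0 := fun h0 ↦ hxA (h0 ▸ A.zero_mem)
  have hxi : x⁻¹ ∈ A := (A.mem_or_inv_mem x).resolve_left hxA
  have : IsUnit (⟨x⁻¹, hxi⟩ : A) := by
    apply hloc.1
    refine isUnit_iff_exists_inv.mpr ⟨⟨algebraMap F E x, hx⟩, Subtype.ext ?_⟩
    show algebraMap F E x⁻¹ * algebraMap F E x = 1
    rw [← map_mul, inv_mul_cancel₀ hx0, map_one]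
  obtain ⟨b, hb⟩ := isUnit_iff_exists_inv.mp this
  have hb' : (x⁻¹ : F) * (b : F) = 1 := congrArg Subtype.val hb
  have hbx : (b : F) = x := by
    field_simp at hb'
    exact hb'
  exact hxA (hbx ▸ b.2)
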